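/- Let Λ be a real vector space and S : (ℕ → Λ) → Λ an ℝ-linear map satisfying the unit and associativity axioms of an algebra over the coperad ℝ[X]. Then S intertwines the right shift of sequences with ε: for every a : ℕ → Λ, S(a[-1]) = ε(S(a)), where a[-1] is the sequence with (a[-1])_0 = 0 and (a[-1])_{n+1} = a_n. -/
import Mathlib


/-- If `(Λ, S)` is an algebra over the coperad `ℝ[X]`
(`S` is ℝ-linear and satisfies the unit and associativity axioms) and
`ε a = S (0, a, 0, 0, …)`, then `S` intertwines the right shift of
sequences with `ε`: `S (a[-1]) = ε (S a)`. -/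
theorem S_right_shift_eq_eps_S
    (Λ : Type*) [AddCommGroup Λ] [Module ℝ Λ]
    (S : (ℕ → Λ) →ₗ[ℝ] Λ)
    (hunit : ∀ a : Λ, S (fun n => if n = 0 then a else 0) = a)
    (hassoc : ∀ a : ℕ → ℕ → Λ,
      S (fun i => S (a i)) = S (fun n => ∑ p ∈ Finset.range (n + 1), a p (n - p)))
    (ε : Λ → Λ) (hε : ∀ x : Λ, ε x = S (fun n => if n = 1 then x else 0))
    (a : ℕ → Λ) :
    S (fun n => match n with | 0 => (0 : Λ) | k + 1 => a k) = ε (S a) := by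
  have h := hassoc (fun i j => if i = 1 then a j else 0)
  have hL : (fun i => S (fun j => if i = 1 then a j else 0))
      = (fun i => if i = 1 then S a else 0) := by
    funext i
    by_cases hi : i = 1
    · simp [hi]
    · simp only [hi, if_false]
      exact map_zero S
  have hR : (fun n => ∑ p ∈ Finset.range (n + 1),
        (fun i j => if i = 1 then a j else (0 : Λ)) p (n - p))
      = (fun n => match n with | 0 => (0 : Λ) | k + 1 => a k) := by
    funext n
    match n with
    | 0 => simp
    | k + 1 =>
      simp only []
      rw [Finset.sum_ite_eq']
      simp
  rw [hL, hR] at h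
  rw [← h, hε]
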